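/- arXiv:2005.04834 — 2 statements merged into one kernel-verified Lean document; each statement's English description precedes it below -/
import Mathlib

section
/- Let Ω be a measurable space, Q₁ and Q₂ probability measures on Ω, and d, k, m natural numbers. Let s₁, s₂ be finite subsets of {1,…,d} with |s₁| = |s₂| = k and min(|s₁ \ s₂|, |s₂ \ s₁|) ≥ 2m. Then for every measurable map ŝ : Ω → Finset(Fin d) satisfying |ŝ(ω)| ≤ k for all ω, one has (1/2)·( Q₁{ω : |s₁ \ ŝ(ω)| ≥ m} + Q₂{ω : |s₂ \ ŝ(ω)| ≥ m} ) ≥ (1/2)·(1 − TV(Q₁, Q₂)); in particular max_{j=1,2} Q_j{ω : |s_j \ ŝ(ω)| ≥ m} ≥ (1/2)·(1 − TV(Q₁, Q₂)). -/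
open MeasureTheory

/-- Total variation distance between two measures:
`TV(P,Q) = sup over measurable sets B of |P(B) − Q(B)|`. -/
noncomputable def tvDist {Ω : Type*} [MeasurableSpace Ω] (P Q : Measure Ω) : ℝ :=
  ⨆ B : {B : Set Ω // MeasurableSet B}, |(P B).toReal - (Q B).toReal|

/-- Combinatorial pigeonhole: any set of size ≤ k misses at least m elements of
`s₁` or at least m elements of `s₂`, when the supports are 2m-separated. -/
lemma miss_one {d k m : ℕ} {s₁ s₂ t : Finset (Fin d)}
    (h₁ : s₁.card = k) (h₂ : s₂.card = k)
    (h_sep : 2 * m ≤ (s₁ \ s₂).card) (ht : t.card ≤ k) :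
    m ≤ (s₁ \ t).card ∨ m ≤ (s₂ \ t).card := by
  by_contra h
  push_neg at h
  obtain ⟨ha₁, ha₂⟩ := h
  have e₁ : (s₁ \ t).card + (s₁ ∩ t).card = k := by
    rw [Finset.card_sdiff_add_card_inter]; exact h₁
  have e₂ : (s₂ \ t).card + (s₂ ∩ t).card = k := by
    rw [Finset.card_sdiff_add_card_inter]; exact h₂
  have hu : ((s₁ ∩ t) ∪ (s₂ ∩ t)).card ≤ k := by
    refine le_trans (Finset.card_le_card ?_) ht
    intro x hx
    rcases Finset.mem_union.mp hx with hx | hx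
    · exact (Finset.mem_inter.mp hx).2
    · exact (Finset.mem_inter.mp hx).2
  have hi : ((s₁ ∩ t) ∩ (s₂ ∩ t)).card ≤ (s₁ ∩ s₂).card := by
    apply Finset.card_le_card
    intro x hx
    simp only [Finset.mem_inter] at hx ⊢
    exact ⟨hx.1.1, hx.2.1⟩
  have hsum : ((s₁ ∩ t) ∪ (s₂ ∩ t)).card + ((s₁ ∩ t) ∩ (s₂ ∩ t)).card
      = (s₁ ∩ t).card + (s₂ ∩ t).card := Finset.card_union_add_card_inter _ _
  have hks : (s₁ \ s₂).card + (s₁ ∩ s₂).card = k := by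
    rw [Finset.card_sdiff_add_card_inter]; exact h₁
  omega

/-- two-point minimax lower bound for support recovery (the paper's
Lemma 1 combined with Le Cam's inequality). -/
theorem support_recovery_two_point {Ω : Type*} [MeasurableSpace Ω]
    (Q₁ Q₂ : Measure Ω) [IsProbabilityMeasure Q₁] [IsProbabilityMeasure Q₂]
    (d k m : ℕ) (s₁ s₂ : Finset (Fin d))
    (h₁ : s₁.card = k) (h₂ : s₂.card = k)
    (h_sep : 2 * m ≤ min (s₁ \ s₂).card (s₂ \ s₁).card)
    (shat : Ω → Finset (Fin d))
    (h_meas : Measurable[_root_.inferInstance, ⊤] shat)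
    (h_size : ∀ ω, (shat ω).card ≤ k) :
    (1 / 2 : ℝ) * ((Q₁ {ω | m ≤ (s₁ \ shat ω).card}).toReal
        + (Q₂ {ω | m ≤ (s₂ \ shat ω).card}).toReal)
      ≥ (1 / 2) * (1 - tvDist Q₁ Q₂) ∧
    max (Q₁ {ω | m ≤ (s₁ \ shat ω).card}).toReal
        (Q₂ {ω | m ≤ (s₂ \ shat ω).card}).toReal
      ≥ (1 / 2) * (1 - tvDist Q₁ Q₂) := by
  set A₁ : Set Ω := {ω | m ≤ (s₁ \ shat ω).card} with hA₁def
  set A₂ : Set Ω := {ω | m ≤ (s₂ \ shat ω).card} with hA₂def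
  have hA₂ : MeasurableSet A₂ := by
    have : A₂ = shat ⁻¹' {t | m ≤ (s₂ \ t).card} := rfl
    rw [this]
    exact h_meas (MeasurableSpace.measurableSet_top)
  -- A₂ᶜ ⊆ A₁
  have hsub : A₂ᶜ ⊆ A₁ := by
    intro ω hω
    rcases miss_one h₁ h₂ (le_trans h_sep (min_le_left _ _)) (h_size ω) with h | h
    · exact h
    · exact absurd h hω
  -- real values
  have ht1 : (Q₁ A₂).toReal + (Q₁ A₂ᶜ).toReal = 1 := by
    rw [← ENNReal.toReal_add (measure_ne_top _ _) (measure_ne_top _ _),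
      measure_add_measure_compl hA₂]
    simp
  have hmono : (Q₁ A₂ᶜ).toReal ≤ (Q₁ A₁).toReal := by
    apply ENNReal.toReal_mono (measure_ne_top _ _)
    exact measure_mono hsub
  -- TV bound
  have htv : |(Q₁ A₂).toReal - (Q₂ A₂).toReal| ≤ tvDist Q₁ Q₂ := by
    have hbdd : BddAbove (Set.range fun B : {B : Set Ω // MeasurableSet B} =>
        |(Q₁ B).toReal - (Q₂ B).toReal|) := by
      refine ⟨1, ?_⟩
      rintro x ⟨B, rfl⟩
      have hq1 : (Q₁ (B : Set Ω)).toReal ≤ 1 := by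
        have := prob_le_one (μ := Q₁) (s := (B : Set Ω))
        simpa using ENNReal.toReal_mono ENNReal.one_ne_top this
      have hq2 : (Q₂ (B : Set Ω)).toReal ≤ 1 := by
        have := prob_le_one (μ := Q₂) (s := (B : Set Ω))
        simpa using ENNReal.toReal_mono ENNReal.one_ne_top this
      have hn1 : 0 ≤ (Q₁ (B : Set Ω)).toReal := ENNReal.toReal_nonneg
      have hn2 : 0 ≤ (Q₂ (B : Set Ω)).toReal := ENNReal.toReal_nonneg
      rw [abs_le]; constructor <;> linarith
    exact le_ciSup hbdd (⟨A₂, hA₂⟩ : {B : Set Ω // MeasurableSet B})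
  have key : 1 - tvDist Q₁ Q₂ ≤ (Q₁ A₁).toReal + (Q₂ A₂).toReal := by
    have habs : (Q₁ A₂).toReal - (Q₂ A₂).toReal ≤ tvDist Q₁ Q₂ :=
      le_trans (le_abs_self _) htv
    linarith
  constructor
  · have : (1 / 2 : ℝ) * (1 - tvDist Q₁ Q₂)
        ≤ (1 / 2) * ((Q₁ A₁).toReal + (Q₂ A₂).toReal) := by linarith
    exact this
  · have hmax : (Q₁ A₁).toReal + (Q₂ A₂).toReal
        ≤ 2 * max (Q₁ A₁).toReal (Q₂ A₂).toReal := by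
      have h1 : (Q₁ A₁).toReal ≤ max (Q₁ A₁).toReal (Q₂ A₂).toReal := le_max_left _ _
      have h2 : (Q₂ A₂).toReal ≤ max (Q₁ A₁).toReal (Q₂ A₂).toReal := le_max_right _ _
      linarith
    have := key
    simp only [ge_iff_le]
    linarith
end

section
/- Let d, k, m, n be natural numbers, σ > 0, μ a probability measure on ℝ^d, and f₁, f₂ : ℝ^d → ℝ measurable functions with ∫ (f₁ − f₂)² dμ < ∞. Let s₁, s₂ be finite subsets of {1,…,d} with |s₁| = |s₂| = k and min(|s₁ \ s₂|, |s₂ \ s₁|) ≥ 2m, and assume f_j depends only on coordinates in s_j for j = 1, 2. For j = 1, 2 let P_j be the probability measure on ℝ^d × ℝ with X ~ μ and Y | X = x ~ N(f_j(x), σ²), and let Q_j = P_j^{⊗n} be the law of n i.i.d. observations. Then for every measurable support estimator ŝ : (ℝ^d × ℝ)^n → Finset(Fin d) with |ŝ(data)| ≤ k for all data, max_{j=1,2} Q_j{ |s_j \ ŝ| ≥ m } ≥ (1/2)·( 1 − sqrt( (n/(4σ²)) · ∫ (f₁ − f₂)² dμ ) ). -/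
open MeasureTheory ProbabilityTheory
open scoped ENNReal NNReal

/-- `f` depends only on the coordinates in `s`. -/
def DependsOnlyOn {d : ℕ} (f : (Fin d → ℝ) → ℝ) (s : Finset (Fin d)) : Prop :=
  ∀ x x' : Fin d → ℝ, (∀ i ∈ s, x i = x' i) → f x = f x'

/-- The joint law on `ℝ^d × ℝ` of `(X, Y)` where `X ~ μ` and `Y = f(X) + ε`
with `ε ~ N(0, σ²)` independent of `X`; i.e. `Y | X = x ~ N(f(x), σ²)`. -/
noncomputable def gaussianRegressionLaw {d : ℕ}
    (μ : Measure (Fin d → ℝ)) (f : (Fin d → ℝ) → ℝ) (σ : ℝ) :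
    Measure ((Fin d → ℝ) × ℝ) :=
  Measure.map (fun p : (Fin d → ℝ) × ℝ => (p.1, f p.1 + p.2))
    (μ.prod (gaussianReal 0 ⟨σ ^ 2, sq_nonneg σ⟩))

set_option maxHeartbeats 2000000

lemma measurable_gauss_density {d : ℕ} {f : (Fin d → ℝ) → ℝ} (hf : Measurable f) (v : ℝ≥0) :
    Measurable (fun p : (Fin d → ℝ) × ℝ => gaussianPDF (f p.1) v p.2) := by
  simp only [gaussianPDF, gaussianPDFReal]
  refine ENNReal.measurable_ofReal.comp ?_
  exact measurable_const.mul ((((measurable_snd.sub (hf.comp measurable_fst)).pow measurable_const).neg.div_const _).exp)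

lemma gaussianRegressionLaw_eq_withDensity {d : ℕ}
    (μ : Measure (Fin d → ℝ)) [SFinite μ] (f : (Fin d → ℝ) → ℝ) (hf : Measurable f)
    {σ : ℝ} (hσ : 0 < σ) :
    gaussianRegressionLaw μ f σ =
      (μ.prod volume).withDensity (fun p => gaussianPDF (f p.1) ⟨σ ^ 2, sq_nonneg σ⟩ p.2) := by
  set v : ℝ≥0 := ⟨σ ^ 2, sq_nonneg σ⟩ with hv
  have hv0 : v ≠ 0 := by
    intro h
    exact (pow_ne_zero 2 hσ.ne') (congrArg NNReal.toReal h)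
  have hT : Measurable (fun p : (Fin d → ℝ) × ℝ => (p.1, f p.1 + p.2)) :=
    (measurable_fst.prodMk ((hf.comp measurable_fst).add measurable_snd))
  ext s hs
  rw [gaussianRegressionLaw, Measure.map_apply hT hs,
    withDensity_apply _ hs]
  haveI : IsProbabilityMeasure (gaussianReal 0 ⟨σ ^ 2, sq_nonneg σ⟩) :=
    instIsProbabilityMeasureGaussianReal 0 ⟨σ ^ 2, sq_nonneg σ⟩
  rw [Measure.prod_apply (hT hs)]
  have key : ∀ x : Fin d → ℝ,
      (gaussianReal 0 v) (Prod.mk x ⁻¹' ((fun p : (Fin d → ℝ) × ℝ => (p.1, f p.1 + p.2)) ⁻¹' s))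
        = ∫⁻ y in Prod.mk x ⁻¹' s, gaussianPDF (f x) v y := by
    intro x
    have hmeas : MeasurableSet (Prod.mk x ⁻¹' s) := measurable_prodMk_left hs
    have h1 : (Prod.mk x ⁻¹' ((fun p : (Fin d → ℝ) × ℝ => (p.1, f p.1 + p.2)) ⁻¹' s))
        = (f x + ·) ⁻¹' (Prod.mk x ⁻¹' s) := rfl
    rw [h1, ← Measure.map_apply (measurable_const_add _) hmeas,
      gaussianReal_map_const_add, zero_add, gaussianReal_apply _ hv0 _]
  rw [lintegral_congr key, ← lintegral_indicator hs,
    lintegral_prod _ ((measurable_gauss_density hf v).indicator hs).aemeasurable]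
  refine lintegral_congr fun x => ?_
  rw [← lintegral_indicator (measurable_prodMk_left hs)]
  refine lintegral_congr fun y => ?_
  by_cases hxy : (x, y) ∈ s <;> simp [Set.indicator_apply, hxy]

lemma lintegral_pi_prod {α : Type*} [MeasurableSpace α] (ν : Measure α) [SigmaFinite ν] :
    ∀ {n : ℕ} (g : Fin n → α → ℝ≥0∞), (∀ i, Measurable (g i)) →
      ∫⁻ x, ∏ i, g i (x i) ∂(Measure.pi fun _ : Fin n => ν) = ∏ i, ∫⁻ y, g i y ∂ν := by
  intro n
  induction n with
  | zero => intro g hg; simp [Measure.pi_of_empty (fun _ : Fin 0 => ν)]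
  | succ n ih =>
    intro g hg
    have hmp := measurePreserving_piFinSuccAbove (fun _ : Fin (n+1) => (ν : Measure α)) 0
    set e := MeasurableEquiv.piFinSuccAbove (fun _ : Fin (n+1) => α) 0
    have hG : Measurable (fun p : α × (Fin n → α) => g 0 p.1 * ∏ i : Fin n, g i.succ (p.2 i)) := by
      exact ((hg 0).comp measurable_fst).mul
        (Finset.measurable_prod _ fun i _ => (hg i.succ).comp ((measurable_pi_apply i).comp measurable_snd))
    calc ∫⁻ x, ∏ i, g i (x i) ∂(Measure.pi fun _ : Fin (n+1) => ν)
        = ∫⁻ x, (fun p : α × (Fin n → α) => g 0 p.1 * ∏ i : Fin n, g i.succ (p.2 i)) (e x)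
            ∂(Measure.pi fun _ : Fin (n+1) => ν) := by
          refine lintegral_congr fun x => ?_
          simp only [e, MeasurableEquiv.piFinSuccAbove_apply]
          rw [Fin.prod_univ_succ]
          congr 1
      _ = ∫⁻ p, g 0 p.1 * ∏ i : Fin n, g i.succ (p.2 i)
            ∂(ν.prod (Measure.pi fun _ : Fin n => ν)) := hmp.lintegral_comp hG
      _ = (∫⁻ y, g 0 y ∂ν) * ∫⁻ b, ∏ i : Fin n, g i.succ (b i) ∂(Measure.pi fun _ : Fin n => ν) :=
          lintegral_prod_mul (hg 0).aemeasurable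
            (Finset.measurable_prod Finset.univ fun i _ => (hg i.succ).comp (measurable_pi_apply i) : Measurable fun b : Fin n → α => ∏ i : Fin n, g i.succ (b i)).aemeasurable
      _ = ∏ i, ∫⁻ y, g i y ∂ν := by rw [ih _ (fun i : Fin n => hg i.succ), Fin.prod_univ_succ]

lemma gaussianRegressionLaw_isProb {d : ℕ} (μ : Measure (Fin d → ℝ)) [IsProbabilityMeasure μ]
    {f : (Fin d → ℝ) → ℝ} (hf : Measurable f) (σ : ℝ) :
    IsProbabilityMeasure (gaussianRegressionLaw μ f σ) := by
  have hT : Measurable (fun p : (Fin d → ℝ) × ℝ => (p.1, f p.1 + p.2)) :=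
    (measurable_fst.prodMk ((hf.comp measurable_fst).add measurable_snd))
  haveI : IsProbabilityMeasure (gaussianReal 0 ⟨σ ^ 2, sq_nonneg σ⟩) :=
    instIsProbabilityMeasureGaussianReal 0 ⟨σ ^ 2, sq_nonneg σ⟩
  exact Measure.isProbabilityMeasure_map hT.aemeasurable

lemma pi_law_eq_withDensity {d : ℕ} (n : ℕ)
    (μ : Measure (Fin d → ℝ)) [IsProbabilityMeasure μ] (f : (Fin d → ℝ) → ℝ) (hf : Measurable f)
    {σ : ℝ} (hσ : 0 < σ) :
    (Measure.pi fun _ : Fin n => gaussianRegressionLaw μ f σ)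
      = (Measure.pi fun _ : Fin n => μ.prod volume).withDensity
          (fun x => ∏ i, gaussianPDF (f (x i).1) ⟨σ ^ 2, sq_nonneg σ⟩ (x i).2) := by
  set v : ℝ≥0 := ⟨σ ^ 2, sq_nonneg σ⟩ with hv
  haveI := gaussianRegressionLaw_isProb μ hf σ
  haveI : ∀ i : Fin n, SigmaFinite ((fun _ : Fin n => gaussianRegressionLaw μ f σ) i) :=
    fun _ => inferInstance
  refine Measure.pi_eq (μ := fun _ : Fin n => gaussianRegressionLaw μ f σ) fun s hs => ?_
  have hmeas : ∀ i : Fin n, Measurable fun ω : (Fin d → ℝ) × ℝ => gaussianPDF (f ω.1) v ω.2 :=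
    fun _ => measurable_gauss_density hf v
  rw [withDensity_apply _ (MeasurableSet.univ_pi hs), ← lintegral_indicator (MeasurableSet.univ_pi hs)]
  have hind : ∀ x : Fin n → (Fin d → ℝ) × ℝ,
      (Set.univ.pi s).indicator (fun x => ∏ i, gaussianPDF (f (x i).1) v (x i).2) x
        = ∏ i, (s i).indicator (fun ω : (Fin d → ℝ) × ℝ => gaussianPDF (f ω.1) v ω.2) (x i) := by
    intro x
    by_cases hx : x ∈ Set.univ.pi s
    · rw [Set.indicator_of_mem hx]
      exact Finset.prod_congr rfl fun i _ => (Set.indicator_of_mem (hx i trivial) (fun ω : (Fin d → ℝ) × ℝ => gaussianPDF (f ω.1) v ω.2)).symm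
    · rw [Set.indicator_of_notMem hx]
      have hx' : ∃ i, x i ∉ s i := by simpa [Set.mem_pi] using hx
      obtain ⟨i, hi⟩ := hx'
      exact (Finset.prod_eq_zero (Finset.mem_univ i) (by simp [Set.indicator_of_notMem hi])).symm
  rw [lintegral_congr hind,
    lintegral_pi_prod _ _ (fun i => (hmeas i).indicator (hs i))]
  refine Finset.prod_congr rfl fun i _ => ?_
  rw [lintegral_indicator (hs i), gaussianRegressionLaw_eq_withDensity μ f hf hσ,
    withDensity_apply _ (hs i)]

open Real in
lemma gaussianPDFReal_mul (a b y : ℝ) {v : ℝ≥0} (hv : (v:ℝ) ≠ 0) :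
    gaussianPDFReal a v y * gaussianPDFReal b v y
      = (Real.exp (-(a-b)^2/(8*v)) * gaussianPDFReal ((a+b)/2) v y)^2 := by
  have hexp : rexp (- (y - a)^2 / (2*v)) * rexp (- (y - b)^2 / (2*v))
      = (rexp (-(a-b)^2/(8*v)))^2 * (rexp (- (y - (a+b)/2)^2 / (2*v)))^2 := by
    have hsq : ∀ t : ℝ, rexp t ^ 2 = rexp (t + t) := fun t => by rw [Real.exp_add, sq]
    rw [hsq, hsq, ← Real.exp_add, ← Real.exp_add]
    congr 1
    field_simp
    ring
  simp only [gaussianPDFReal]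
  rw [show ((√(2 * π * v))⁻¹ * rexp (- (y - a)^2 / (2*v))) * ((√(2 * π * v))⁻¹ * rexp (- (y - b)^2 / (2*v)))
      = ((√(2 * π * v))⁻¹)^2 * (rexp (- (y - a)^2 / (2*v)) * rexp (- (y - b)^2 / (2*v))) by ring, hexp]
  ring

lemma gaussianPDF_sqrt_mul (a b y : ℝ) {v : ℝ≥0} (hv : v ≠ 0) :
    (gaussianPDF a v y * gaussianPDF b v y) ^ (1/2 : ℝ)
      = ENNReal.ofReal (Real.exp (-(a-b)^2/(8*v))) * gaussianPDF ((a+b)/2) v y := by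
  have hv' : (v:ℝ) ≠ 0 := by exact_mod_cast hv
  have h1 : gaussianPDF a v y * gaussianPDF b v y
      = (ENNReal.ofReal (Real.exp (-(a-b)^2/(8*v)) * gaussianPDFReal ((a+b)/2) v y))^2 := by
    rw [gaussianPDF, gaussianPDF, ← ENNReal.ofReal_mul (gaussianPDFReal_nonneg _ _ _),
      gaussianPDFReal_mul a b y hv', ← ENNReal.ofReal_pow
        (mul_nonneg (Real.exp_nonneg _) (gaussianPDFReal_nonneg _ _ _)), sq]
  rw [h1, ← ENNReal.rpow_natCast _ 2, ← ENNReal.rpow_mul]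
  norm_num
  rw [ENNReal.ofReal_mul (Real.exp_nonneg _)]
  rfl

lemma affinity_eq {d : ℕ} (μ : Measure (Fin d → ℝ)) [IsProbabilityMeasure μ]
    {f₁ f₂ : (Fin d → ℝ) → ℝ} (hf₁ : Measurable f₁) (hf₂ : Measurable f₂)
    {σ : ℝ} (hσ : 0 < σ) :
    ∫⁻ ω : (Fin d → ℝ) × ℝ,
        (gaussianPDF (f₁ ω.1) ⟨σ ^ 2, sq_nonneg σ⟩ ω.2 *
          gaussianPDF (f₂ ω.1) ⟨σ ^ 2, sq_nonneg σ⟩ ω.2) ^ (1/2 : ℝ) ∂(μ.prod volume)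
      = ∫⁻ x, ENNReal.ofReal (Real.exp (-(f₁ x - f₂ x)^2/(8 * σ^2))) ∂μ := by
  set v : ℝ≥0 := ⟨σ ^ 2, sq_nonneg σ⟩ with hv
  have hv0 : v ≠ 0 := by
    intro h
    exact (pow_ne_zero 2 hσ.ne') (congrArg NNReal.toReal h)
  have hmeas : Measurable (fun ω : (Fin d → ℝ) × ℝ =>
      (gaussianPDF (f₁ ω.1) v ω.2 * gaussianPDF (f₂ ω.1) v ω.2) ^ (1/2 : ℝ)) :=
    ((measurable_gauss_density hf₁ v).mul (measurable_gauss_density hf₂ v)).pow measurable_const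
  rw [lintegral_prod _ hmeas.aemeasurable]
  refine lintegral_congr fun x => ?_
  have hpt : ∀ y : ℝ, (gaussianPDF (f₁ x) v y * gaussianPDF (f₂ x) v y) ^ (1/2 : ℝ)
      = ENNReal.ofReal (Real.exp (-(f₁ x - f₂ x)^2/(8*v))) * gaussianPDF ((f₁ x + f₂ x)/2) v y :=
    fun y => gaussianPDF_sqrt_mul (f₁ x) (f₂ x) y hv0
  simp only [hpt]
  rw [lintegral_const_mul _ (measurable_gaussianPDF _ _), lintegral_gaussianPDF_eq_one _ hv0, mul_one]
  norm_num [hv]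
  rfl

lemma support_comb {d k m : ℕ} (s₁ s₂ t : Finset (Fin d)) (h₁ : s₁.card = k)
    (h_sep : 2 * m ≤ min (s₁ \ s₂).card (s₂ \ s₁).card) (ht : t.card ≤ k) :
    m ≤ (s₁ \ t).card ∨ m ≤ (s₂ \ t).card := by
  by_contra hcon
  push_neg at hcon
  have hsub : s₁ ∪ s₂ ⊆ (s₁ \ t) ∪ (s₂ \ t) ∪ t := by
    intro x hx
    simp only [Finset.mem_union, Finset.mem_sdiff] at hx ⊢
    by_cases hxt : x ∈ t
    · tauto
    · tauto
  have hcard : (s₁ ∪ s₂).card ≤ (s₁ \ t).card + (s₂ \ t).card + t.card :=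
    le_trans (Finset.card_le_card hsub)
      (le_trans (Finset.card_union_le _ _) (by gcongr; exact Finset.card_union_le _ _))
  have hcard2 : (s₂ \ s₁).card + s₁.card = (s₂ ∪ s₁).card := Finset.card_sdiff_add_card s₂ s₁
  rw [Finset.union_comm] at hcard2
  have hm : 2 * m ≤ (s₂ \ s₁).card := le_trans h_sep (min_le_right _ _)
  omega

/-- two-point minimax lower bound for support recovery in
Gaussian-noise regression (instantiation of the paper's Theorem 2). -/
theorem support_recovery_minimax_gaussian {d k m n : ℕ} (σ : ℝ) (hσ : 0 < σ)
    (μ : Measure (Fin d → ℝ)) [IsProbabilityMeasure μ]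
    (f₁ f₂ : (Fin d → ℝ) → ℝ) (hf₁ : Measurable f₁) (hf₂ : Measurable f₂)
    (h_int : Integrable (fun x => (f₁ x - f₂ x) ^ 2) μ)
    (s₁ s₂ : Finset (Fin d)) (h₁ : s₁.card = k) (h₂ : s₂.card = k)
    (h_sep : 2 * m ≤ min (s₁ \ s₂).card (s₂ \ s₁).card)
    (hdep₁ : DependsOnlyOn f₁ s₁) (hdep₂ : DependsOnlyOn f₂ s₂)
    (shat : (Fin n → (Fin d → ℝ) × ℝ) → Finset (Fin d))
    (h_meas : Measurable[_root_.inferInstance, ⊤] shat)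
    (h_size : ∀ data, (shat data).card ≤ k) :
    max ((Measure.pi fun _ : Fin n => gaussianRegressionLaw μ f₁ σ)
          {data | m ≤ (s₁ \ shat data).card}).toReal
        ((Measure.pi fun _ : Fin n => gaussianRegressionLaw μ f₂ σ)
          {data | m ≤ (s₂ \ shat data).card}).toReal
      ≥ (1 / 2 : ℝ) *
        (1 - Real.sqrt ((n / (4 * σ ^ 2)) * ∫ x, (f₁ x - f₂ x) ^ 2 ∂μ)) := by
  classical
  set v : ℝ≥0 := ⟨σ ^ 2, sq_nonneg σ⟩ with hv
  have hv0 : v ≠ 0 := by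
    intro h
    exact (pow_ne_zero 2 hσ.ne') (congrArg NNReal.toReal h)
  set D : ℝ := ∫ x, (f₁ x - f₂ x) ^ 2 ∂μ with hD
  have hD0 : 0 ≤ D := integral_nonneg fun x => sq_nonneg _
  set ε : ℝ := Real.sqrt ((n / (4 * σ ^ 2)) * D) with hε
  -- notation
  let Ω := ((Fin d → ℝ) × ℝ)
  set p₁ : Ω → ℝ≥0∞ := fun ω => gaussianPDF (f₁ ω.1) v ω.2 with hp₁def
  set p₂ : Ω → ℝ≥0∞ := fun ω => gaussianPDF (f₂ ω.1) v ω.2 with hp₂def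
  have hp₁ : Measurable p₁ := measurable_gauss_density hf₁ v
  have hp₂ : Measurable p₂ := measurable_gauss_density hf₂ v
  set ν : Measure Ω := μ.prod volume with hνdef
  set νn : Measure (Fin n → Ω) := Measure.pi fun _ : Fin n => ν with hνndef
  set q₁ : (Fin n → Ω) → ℝ≥0∞ := fun x => ∏ i, p₁ (x i) with hq₁def
  set q₂ : (Fin n → Ω) → ℝ≥0∞ := fun x => ∏ i, p₂ (x i) with hq₂def
  have hq₁ : Measurable q₁ :=
    Finset.measurable_prod _ fun i _ => hp₁.comp (measurable_pi_apply i)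
  have hq₂ : Measurable q₂ :=
    Finset.measurable_prod _ fun i _ => hp₂.comp (measurable_pi_apply i)
  set P₁ : Measure (Fin n → Ω) := Measure.pi fun _ : Fin n => gaussianRegressionLaw μ f₁ σ with hP₁def
  set P₂ : Measure (Fin n → Ω) := Measure.pi fun _ : Fin n => gaussianRegressionLaw μ f₂ σ with hP₂def
  haveI := gaussianRegressionLaw_isProb μ hf₁ σ
  haveI := gaussianRegressionLaw_isProb μ hf₂ σ
  haveI : IsProbabilityMeasure P₁ := by rw [hP₁def]; infer_instance
  haveI : IsProbabilityMeasure P₂ := by rw [hP₂def]; infer_instance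
  have hQ₁ : P₁ = νn.withDensity q₁ := pi_law_eq_withDensity n μ f₁ hf₁ hσ
  have hQ₂ : P₂ = νn.withDensity q₂ := pi_law_eq_withDensity n μ f₂ hf₂ hσ
  -- the two events
  set A₁ : Set (Fin n → Ω) := {data | m ≤ (s₁ \ shat data).card} with hA₁def
  set A₂ : Set (Fin n → Ω) := {data | m ≤ (s₂ \ shat data).card} with hA₂def
  have hA₁ : MeasurableSet A₁ :=
    h_meas (show MeasurableSet[⊤] {t : Finset (Fin d) | m ≤ (s₁ \ t).card} from trivial)
  have hA₂ : MeasurableSet A₂ :=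
    h_meas (show MeasurableSet[⊤] {t : Finset (Fin d) | m ≤ (s₂ \ t).card} from trivial)
  have hunion : A₁ ∪ A₂ = Set.univ := by
    ext data
    simp only [Set.mem_union, Set.mem_setOf_eq, Set.mem_univ, iff_true, hA₁def, hA₂def]
    exact support_comb s₁ s₂ (shat data) h₁ h_sep (h_size data)
  -- basic lintegral identities
  have hminmeas : Measurable fun x => min (q₁ x) (q₂ x) := hq₁.min hq₂
  have hq₁int : ∫⁻ x, q₁ x ∂νn = 1 := by
    have h1 : (νn.withDensity q₁) Set.univ = 1 := by rw [← hQ₁]; exact measure_univ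
    rwa [withDensity_apply _ MeasurableSet.univ, Measure.restrict_univ] at h1
  have hq₂int : ∫⁻ x, q₂ x ∂νn = 1 := by
    have h1 : (νn.withDensity q₂) Set.univ = 1 := by rw [← hQ₂]; exact measure_univ
    rwa [withDensity_apply _ MeasurableSet.univ, Measure.restrict_univ] at h1
  set a : ℝ≥0∞ := ∫⁻ x, min (q₁ x) (q₂ x) ∂νn with hadef
  set c : ℝ≥0∞ := ∫⁻ x, (q₁ x - min (q₁ x) (q₂ x)) ∂νn with hcdef
  set b : ℝ≥0∞ := ∫⁻ x, max (q₁ x) (q₂ x) ∂νn with hbdef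
  have hac : a + c = 1 := by
    rw [hadef, hcdef, ← lintegral_add_left hminmeas]
    rw [lintegral_congr fun x => add_tsub_cancel_of_le (min_le_left (q₁ x) (q₂ x))]
    exact hq₁int
  have hab : a + b = 2 := by
    rw [hadef, hbdef, ← lintegral_add_left hminmeas,
      lintegral_congr fun x => min_add_max (q₁ x) (q₂ x),
      lintegral_add_left hq₁, hq₁int, hq₂int]
    norm_num
  have ha1 : a ≤ 1 := by rw [← hq₁int]; exact lintegral_mono fun x => min_le_left _ _
  have hane : a ≠ ⊤ := (ha1.trans_lt ENNReal.one_lt_top).ne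
  have hc1 : c ≤ 1 := by rw [← hac]; exact le_add_self
  have hcne : c ≠ ⊤ := (hc1.trans_lt ENNReal.one_lt_top).ne
  have hb2 : b ≤ 2 := by rw [← hab]; exact le_add_self
  have hbne : b ≠ ⊤ := ne_top_of_le_ne_top ENNReal.ofNat_ne_top hb2
  -- TV-type bound
  have htv : P₁ A₂ ≤ P₂ A₂ + c := by
    rw [hQ₁, hQ₂, withDensity_apply _ hA₂, withDensity_apply _ hA₂]
    calc ∫⁻ x in A₂, q₁ x ∂νn
        = ∫⁻ x in A₂, (min (q₁ x) (q₂ x) + (q₁ x - min (q₁ x) (q₂ x))) ∂νn :=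
          lintegral_congr fun x => (add_tsub_cancel_of_le (min_le_left (q₁ x) (q₂ x))).symm
      _ = (∫⁻ x in A₂, min (q₁ x) (q₂ x) ∂νn) + ∫⁻ x in A₂, (q₁ x - min (q₁ x) (q₂ x)) ∂νn :=
          lintegral_add_left hminmeas _
      _ ≤ (∫⁻ x in A₂, q₂ x ∂νn) + c :=
          add_le_add (lintegral_mono fun x => min_le_right _ _)
            (setLIntegral_le_lintegral _ _)
  -- affinity
  set r : ℝ≥0∞ := ∫⁻ x, ENNReal.ofReal (Real.exp (-(f₁ x - f₂ x)^2/(8 * σ^2))) ∂μ with hrdef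
  set ρ : ℝ≥0∞ := ∫⁻ x, (q₁ x * q₂ x) ^ (1/2 : ℝ) ∂νn with hρdef
  have hρr : ρ = r ^ n := by
    have hfact : ∀ x : Fin n → Ω,
        (q₁ x * q₂ x) ^ (1/2 : ℝ) = ∏ i, (p₁ (x i) * p₂ (x i)) ^ (1/2 : ℝ) := by
      intro x
      rw [hq₁def, hq₂def, ← Finset.prod_mul_distrib,
        ENNReal.prod_rpow_of_nonneg (by norm_num : (0:ℝ) ≤ 1/2)]
    rw [hρdef, lintegral_congr hfact,
      lintegral_pi_prod ν (fun _ ω => (p₁ ω * p₂ ω) ^ (1/2:ℝ)) (fun i => (hp₁.mul hp₂).pow measurable_const)]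
    rw [Finset.prod_const, Finset.card_univ, Fintype.card_fin]
    congr 1
    exact affinity_eq μ hf₁ hf₂ hσ
  -- Hölder inequality: ρ² ≤ a·b
  have hconj : Real.HolderConjugate 2 2 := Real.HolderConjugate.two_two
  have hcollapse : ∀ h : (Fin n → (Fin d → ℝ) × ℝ) → ℝ≥0∞,
      (∫⁻ x, (h x ^ (1/2:ℝ)) ^ (2:ℝ) ∂νn) = ∫⁻ x, h x ∂νn := fun h =>
    lintegral_congr fun x => by rw [← ENNReal.rpow_mul]; norm_num
  have hρ_le : ρ ≤ a ^ (1/2 : ℝ) * b ^ (1/2 : ℝ) := by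
    have hpt : ∀ x, (q₁ x * q₂ x) ^ (1/2:ℝ)
        = ((fun y => min (q₁ y) (q₂ y) ^ (1/2:ℝ)) * fun y => max (q₁ y) (q₂ y) ^ (1/2:ℝ)) x := by
      intro x
      show _ = min (q₁ x) (q₂ x) ^ (1/2:ℝ) * max (q₁ x) (q₂ x) ^ (1/2:ℝ)
      rw [← ENNReal.mul_rpow_of_nonneg _ _ (by norm_num : (0:ℝ) ≤ 1/2), min_mul_max]
    rw [hρdef, lintegral_congr hpt]
    have hH := ENNReal.lintegral_mul_le_Lp_mul_Lq νn hconj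
      ((hminmeas.pow measurable_const).aemeasurable :
        AEMeasurable (fun y => min (q₁ y) (q₂ y) ^ (1/2:ℝ)) νn)
      (((hq₁.max hq₂).pow measurable_const).aemeasurable :
        AEMeasurable (fun y => max (q₁ y) (q₂ y) ^ (1/2:ℝ)) νn)
    calc ∫⁻ x, ((fun y => min (q₁ y) (q₂ y) ^ (1/2:ℝ)) * fun y => max (q₁ y) (q₂ y) ^ (1/2:ℝ)) x ∂νn
        ≤ (∫⁻ x, (min (q₁ x) (q₂ x) ^ (1/2:ℝ)) ^ (2:ℝ) ∂νn) ^ (1/(2:ℝ)) *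
          (∫⁻ x, (max (q₁ x) (q₂ x) ^ (1/2:ℝ)) ^ (2:ℝ) ∂νn) ^ (1/(2:ℝ)) := hH
      _ = a ^ (1/2 : ℝ) * b ^ (1/2 : ℝ) := by
          rw [hcollapse (fun y => min (q₁ y) (q₂ y)), hcollapse (fun y => max (q₁ y) (q₂ y))]
  -- bounds on r
  have hr1 : r ≤ 1 := by
    rw [hrdef]
    calc ∫⁻ x, ENNReal.ofReal (Real.exp (-(f₁ x - f₂ x)^2/(8 * σ^2))) ∂μ
        ≤ ∫⁻ _, 1 ∂μ := lintegral_mono fun x => ENNReal.ofReal_le_one.mpr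
          (Real.exp_le_one_iff.mpr (div_nonpos_iff.mpr (Or.inr ⟨neg_nonpos.mpr (sq_nonneg _), by positivity⟩)))
      _ = 1 := by simp
  have hrne : r ≠ ⊤ := (hr1.trans_lt ENNReal.one_lt_top).ne
  have hρ1 : ρ ≤ 1 := by rw [hρr]; exact pow_le_one' hr1 n
  -- move to real numbers
  set aR : ℝ := a.toReal with haRdef
  set bR : ℝ := b.toReal with hbRdef
  set cR : ℝ := c.toReal with hcRdef
  set rR : ℝ := r.toReal with hrRdef
  have haR1 : aR ≤ 1 := by
    simpa using (ENNReal.toReal_le_toReal hane ENNReal.one_ne_top).mpr ha1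
  have hrR1 : rR ≤ 1 := by
    simpa using (ENNReal.toReal_le_toReal hrne ENNReal.one_ne_top).mpr hr1
  have haR0 : 0 ≤ aR := ENNReal.toReal_nonneg
  have hbR0 : 0 ≤ bR := ENNReal.toReal_nonneg
  have hcR0 : 0 ≤ cR := ENNReal.toReal_nonneg
  have hrR0 : 0 ≤ rR := ENNReal.toReal_nonneg
  have hacR : aR + cR = 1 := by
    rw [haRdef, hcRdef, ← ENNReal.toReal_add hane hcne, hac, ENNReal.toReal_one]
  have habR : aR + bR = 2 := by
    rw [haRdef, hbRdef, ← ENNReal.toReal_add hane hbne, hab]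
    simp
  have hρR : ρ.toReal = rR ^ n := by rw [hρr, ENNReal.toReal_pow, hrRdef]
  have hρR_le : rR ^ n ≤ Real.sqrt aR * Real.sqrt bR := by
    have hrhs_ne : a ^ (1/2 : ℝ) * b ^ (1/2 : ℝ) ≠ ⊤ :=
      ENNReal.mul_ne_top (ENNReal.rpow_ne_top_of_nonneg (by norm_num) hane)
        (ENNReal.rpow_ne_top_of_nonneg (by norm_num) hbne)
    have h := (ENNReal.toReal_le_toReal ((hρ1.trans_lt ENNReal.one_lt_top).ne) hrhs_ne).mpr hρ_le
    rw [hρR] at h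
    rw [ENNReal.toReal_mul, ← ENNReal.toReal_rpow, ← ENNReal.toReal_rpow] at h
    rwa [Real.sqrt_eq_rpow, Real.sqrt_eq_rpow]
  have hρsq : (rR ^ n) ^ 2 ≤ aR * bR := by
    nlinarith [Real.sq_sqrt haR0, Real.sq_sqrt hbR0, Real.sqrt_nonneg aR, Real.sqrt_nonneg bR,
      pow_nonneg hrR0 n]
  -- lower bound on rR
  have hmeas_exp : Measurable fun x => Real.exp (-(f₁ x - f₂ x)^2/(8 * σ^2)) :=
    Real.measurable_exp.comp ((((hf₁.sub hf₂).pow measurable_const).neg).div_const _)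
  have hintexp : Integrable (fun x => Real.exp (-(f₁ x - f₂ x)^2/(8 * σ^2))) μ := by
    refine Integrable.mono' (integrable_const (1:ℝ)) hmeas_exp.aestronglyMeasurable
      (ae_of_all _ fun x => ?_)
    rw [Real.norm_eq_abs, abs_of_nonneg (Real.exp_nonneg _)]
    exact Real.exp_le_one_iff.mpr (div_nonpos_iff.mpr (Or.inr ⟨neg_nonpos.mpr (sq_nonneg _), by positivity⟩))
  have hrR_eq : rR = ∫ x, Real.exp (-(f₁ x - f₂ x)^2/(8 * σ^2)) ∂μ := by
    rw [hrRdef, hrdef, ← ofReal_integral_eq_lintegral_ofReal hintexp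
      (ae_of_all _ fun x => Real.exp_nonneg _),
      ENNReal.toReal_ofReal (integral_nonneg fun x => Real.exp_nonneg _)]
  have hrR_lb : 1 - D/(8 * σ^2) ≤ rR := by
    rw [hrR_eq]
    have hmono : ∫ x, (1 - (f₁ x - f₂ x)^2/(8 * σ^2)) ∂μ
        ≤ ∫ x, Real.exp (-(f₁ x - f₂ x)^2/(8 * σ^2)) ∂μ := by
      refine integral_mono ((integrable_const 1).sub (h_int.div_const _)) hintexp fun x => ?_
      have hb := Real.add_one_le_exp (-(f₁ x - f₂ x)^2/(8 * σ^2))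
      have : -((f₁ x - f₂ x)^2/(8 * σ^2)) = -(f₁ x - f₂ x)^2/(8 * σ^2) := by ring
      linarith [hb, this]
    have heq : ∫ x, (1 - (f₁ x - f₂ x)^2/(8 * σ^2)) ∂μ = 1 - D/(8 * σ^2) := by
      rw [integral_sub (integrable_const 1) (h_int.div_const _), integral_const]
      simp [integral_div, hD]
    linarith
  -- the key bound : 1 - aR ≤ ε
  have hkey : 1 - aR ≤ ε := by
    have hbR : bR = 2 - aR := by linarith
    have h2 : (1 - aR)^2 ≤ 1 - (rR ^ n)^2 := by nlinarith
    have hBern : 1 + (n:ℝ) * (rR^2 - 1) ≤ (rR^2) ^ n := by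
      have := one_add_mul_le_pow (by nlinarith : (-2:ℝ) ≤ rR^2 - 1) n
      simpa using this
    have h3 : 1 - (rR ^ n)^2 ≤ (n:ℝ) * (1 - rR^2) := by
      have hpow : (rR ^ n)^2 = (rR^2) ^ n := by rw [← pow_mul, ← pow_mul, Nat.mul_comm]
      rw [hpow]; linarith
    have h4 : (n:ℝ) * (1 - rR^2) ≤ (n:ℝ) * (2 * (1 - rR)) := by
      have : 1 - rR^2 ≤ 2 * (1 - rR) := by nlinarith
      exact mul_le_mul_of_nonneg_left this (Nat.cast_nonneg n)
    have h5 : (n:ℝ) * (2 * (1 - rR)) ≤ (n:ℝ) * (2 * (D/(8 * σ^2))) := by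
      have h6 : 1 - rR ≤ D/(8 * σ^2) := by linarith
      have h7 : 2 * (1 - rR) ≤ 2 * (D/(8 * σ^2)) := by linarith
      exact mul_le_mul_of_nonneg_left h7 (Nat.cast_nonneg n)
    have harg : (1 - aR)^2 ≤ (n/(4 * σ^2)) * D := by
      have hid : (n:ℝ) * (2 * (D/(8 * σ^2))) = (n/(4 * σ^2)) * D := by
        field_simp
        ring
      linarith
    calc 1 - aR = Real.sqrt ((1 - aR)^2) := (Real.sqrt_sq (by linarith)).symm
      _ ≤ ε := by rw [hε]; exact Real.sqrt_le_sqrt harg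
  -- final assembly
  have hcompl : A₂ᶜ ⊆ A₁ := by
    rw [Set.compl_subset_iff_union, Set.union_comm]
    exact hunion
  have h1A : 1 - P₁ A₂ ≤ P₁ A₁ := by
    rw [← prob_compl_eq_one_sub hA₂]
    exact measure_mono hcompl
  set x₁ : ℝ := (P₁ A₁).toReal with hx₁def
  set y : ℝ := (P₁ A₂).toReal with hydef
  set x₂ : ℝ := (P₂ A₂).toReal with hx₂def
  have hx₁ : 1 - y ≤ x₁ := by
    have := (ENNReal.toReal_le_toReal (by finiteness) (measure_ne_top P₁ A₁)).mpr h1A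
    rwa [ENNReal.toReal_sub_of_le prob_le_one ENNReal.one_ne_top, ENNReal.toReal_one] at this
  have hy : y ≤ x₂ + cR := by
    have := (ENNReal.toReal_le_toReal (measure_ne_top P₁ A₂)
      (ENNReal.add_ne_top.mpr ⟨measure_ne_top P₂ A₂, hcne⟩)).mpr htv
    rwa [ENNReal.toReal_add (measure_ne_top P₂ A₂) hcne] at this
  have hmax : (x₁ + x₂) / 2 ≤ max x₁ x₂ := by
    cases le_total x₁ x₂ with
    | inl h => rw [max_eq_right h]; linarith
    | inr h => rw [max_eq_left h]; linarith
  have : 1 - cR ≤ x₁ + x₂ := by linarith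
  calc (1 / 2 : ℝ) * (1 - ε) ≤ (x₁ + x₂) / 2 := by linarith
    _ ≤ max x₁ x₂ := hmax
end
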